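/- Let X be a compact Hausdorff space, σ : X → X a homeomorphism, and f : ℤ × X → ℤ a function such that f(n, ·) is continuous for each n ∈ ℤ, f(m + n, x) = f(m, x) + f(n, σ^m(x)) for all m, n ∈ ℤ and x ∈ X, and n ↦ f(n, x) is a bijection of ℤ for each x ∈ X. Let X₁ := {x ∈ X : there is N ∈ ℕ such that f(n, x) > 0 and f(−n, x) < 0 for all n > N} and X₂ := {x ∈ X : there is N ∈ ℕ such that f(n, x) < 0 and f(−n, x) > 0 for all n > N}. Then there exist continuous functions a : X₁ → ℤ and b : X₂ → ℤ such that f(1, x) = a(x) − a(σ(x)) + 1 for all x ∈ X₁ and f(1, x) = b(x) − b(σ(x)) − 1 for all x ∈ X₂. -/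

import Mathlib

open Set Filter Topology

/-- The basic counting quantity: number of `m ≤ k` with `t+1 ≤ g m` minus
number of `m ≥ k+1` with `g m ≤ t`. -/
private noncomputable def Dfun (g : ℤ → ℤ) (k t : ℤ) : ℤ :=
  ({m : ℤ | m ≤ k ∧ t + 1 ≤ g m}.ncard : ℤ) - ({m : ℤ | k + 1 ≤ m ∧ g m ≤ t}.ncard : ℤ)

private lemma finP {g : ℤ → ℤ} {N : ℤ} (hinj : Function.Injective g)
    (hneg : ∀ m, m < -N → g m < 0) (k t : ℤ) :
    {m : ℤ | m ≤ k ∧ t ≤ g m}.Finite := by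
  have hsub : {m : ℤ | m ≤ k ∧ t ≤ g m} ⊆ Set.Icc (-N) k ∪ g ⁻¹' (Set.Icc t (-1)) := by
    rintro m ⟨h1, h2⟩
    by_cases h : -N ≤ m
    · exact Or.inl ⟨h, h1⟩
    · exact Or.inr ⟨h2, by have := hneg m (by omega); omega⟩
  exact ((Set.finite_Icc (-N) k).union
    (Set.Finite.preimage hinj.injOn (Set.finite_Icc t (-1)))).subset hsub

private lemma finQ {g : ℤ → ℤ} {N : ℤ} (hinj : Function.Injective g)
    (hpos : ∀ m, N < m → 0 < g m) (k t : ℤ) :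
    {m : ℤ | k ≤ m ∧ g m ≤ t}.Finite := by
  have hsub : {m : ℤ | k ≤ m ∧ g m ≤ t} ⊆ Set.Icc k N ∪ g ⁻¹' (Set.Icc 1 t) := by
    rintro m ⟨h1, h2⟩
    by_cases h : m ≤ N
    · exact Or.inl ⟨h1, h⟩
    · exact Or.inr ⟨by have := hpos m (by omega); omega, h2⟩
  exact ((Set.finite_Icc k N).union
    (Set.Finite.preimage hinj.injOn (Set.finite_Icc 1 t))).subset hsub

private lemma Dk {g : ℤ → ℤ} {N : ℤ} (hinj : Function.Injective g)
    (hpos : ∀ m, N < m → 0 < g m) (hneg : ∀ m, m < -N → g m < 0) (k t : ℤ) :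
    Dfun g (k + 1) t = Dfun g k t + 1 := by
  unfold Dfun
  rcases le_or_gt (g (k + 1)) t with h | h
  · have hP : {m : ℤ | m ≤ k + 1 ∧ t + 1 ≤ g m} = {m : ℤ | m ≤ k ∧ t + 1 ≤ g m} := by
      ext m
      simp only [Set.mem_setOf_eq]
      constructor
      · rintro ⟨h1, h2⟩
        refine ⟨?_, h2⟩
        by_contra hc
        have hm : m = k + 1 := by omega
        subst hm; omega
      · rintro ⟨h1, h2⟩; exact ⟨by omega, h2⟩
    have hQ : {m : ℤ | k + 1 ≤ m ∧ g m ≤ t} = insert (k + 1) {m : ℤ | k + 1 + 1 ≤ m ∧ g m ≤ t} := by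
      ext m
      simp only [Set.mem_setOf_eq, Set.mem_insert_iff]
      constructor
      · rintro ⟨h1, h2⟩
        by_cases hm : m = k + 1
        · exact Or.inl hm
        · exact Or.inr ⟨by omega, h2⟩
      · rintro (rfl | ⟨h1, h2⟩)
        · exact ⟨le_refl _, h⟩
        · exact ⟨by omega, h2⟩
    rw [hP, hQ, Set.ncard_insert_of_notMem (by simp only [Set.mem_setOf_eq]; omega)
      (finQ hinj hpos (k + 1 + 1) t)]
    push_cast; ring
  · have hP : {m : ℤ | m ≤ k + 1 ∧ t + 1 ≤ g m} = insert (k + 1) {m : ℤ | m ≤ k ∧ t + 1 ≤ g m} := by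
      ext m
      simp only [Set.mem_setOf_eq, Set.mem_insert_iff]
      constructor
      · rintro ⟨h1, h2⟩
        by_cases hm : m = k + 1
        · exact Or.inl hm
        · exact Or.inr ⟨by omega, h2⟩
      · rintro (rfl | ⟨h1, h2⟩)
        · exact ⟨le_refl _, by omega⟩
        · exact ⟨by omega, h2⟩
    have hQ : {m : ℤ | k + 1 + 1 ≤ m ∧ g m ≤ t} = {m : ℤ | k + 1 ≤ m ∧ g m ≤ t} := by
      ext m
      simp only [Set.mem_setOf_eq]
      constructor
      · rintro ⟨h1, h2⟩; exact ⟨by omega, h2⟩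
      · rintro ⟨h1, h2⟩
        refine ⟨?_, h2⟩
        by_contra hc
        have hm : m = k + 1 := by omega
        subst hm; omega
    rw [hP, hQ, Set.ncard_insert_of_notMem (by simp only [Set.mem_setOf_eq]; omega)
      (finP hinj hneg k (t + 1))]
    push_cast; ring

private lemma Dt {g : ℤ → ℤ} {N : ℤ} (hinj : Function.Injective g)
    (hsurj : Function.Surjective g)
    (hpos : ∀ m, N < m → 0 < g m) (hneg : ∀ m, m < -N → g m < 0) (k t : ℤ) :
    Dfun g k (t + 1) = Dfun g k t - 1 := by
  obtain ⟨s, hs⟩ := hsurj (t + 1)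
  unfold Dfun
  rcases le_or_gt s k with hsk | hsk
  · have hP : {m : ℤ | m ≤ k ∧ t + 1 ≤ g m} = insert s {m : ℤ | m ≤ k ∧ t + 1 + 1 ≤ g m} := by
      ext m
      simp only [Set.mem_setOf_eq, Set.mem_insert_iff]
      constructor
      · rintro ⟨h1, h2⟩
        by_cases hm : g m = t + 1
        · exact Or.inl (hinj (hm.trans hs.symm))
        · exact Or.inr ⟨h1, by omega⟩
      · rintro (rfl | ⟨h1, h2⟩)
        · exact ⟨hsk, by omega⟩
        · exact ⟨h1, by omega⟩
    have hQ : {m : ℤ | k + 1 ≤ m ∧ g m ≤ t + 1} = {m : ℤ | k + 1 ≤ m ∧ g m ≤ t} := by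
      ext m
      simp only [Set.mem_setOf_eq]
      constructor
      · rintro ⟨h1, h2⟩
        refine ⟨h1, ?_⟩
        by_cases hm : g m = t + 1
        · have := hinj (hm.trans hs.symm); omega
        · omega
      · rintro ⟨h1, h2⟩; exact ⟨h1, by omega⟩
    rw [hP, hQ, Set.ncard_insert_of_notMem (by simp only [Set.mem_setOf_eq]; omega)
      (finP hinj hneg k (t + 1 + 1))]
    push_cast; ring
  · have hP : {m : ℤ | m ≤ k ∧ t + 1 + 1 ≤ g m} = {m : ℤ | m ≤ k ∧ t + 1 ≤ g m} := by
      ext m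
      simp only [Set.mem_setOf_eq]
      constructor
      · rintro ⟨h1, h2⟩; exact ⟨h1, by omega⟩
      · rintro ⟨h1, h2⟩
        refine ⟨h1, ?_⟩
        by_cases hm : g m = t + 1
        · have := hinj (hm.trans hs.symm); omega
        · omega
    have hQ : {m : ℤ | k + 1 ≤ m ∧ g m ≤ t + 1} = insert s {m : ℤ | k + 1 ≤ m ∧ g m ≤ t} := by
      ext m
      simp only [Set.mem_setOf_eq, Set.mem_insert_iff]
      constructor
      · rintro ⟨h1, h2⟩
        by_cases hm : g m = t + 1
        · exact Or.inl (hinj (hm.trans hs.symm))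
        · exact Or.inr ⟨h1, by omega⟩
      · rintro (rfl | ⟨h1, h2⟩)
        · exact ⟨by omega, by omega⟩
        · exact ⟨h1, by omega⟩
    rw [hP, hQ, Set.ncard_insert_of_notMem (by simp only [Set.mem_setOf_eq]; omega)
      (finQ hinj hpos (k + 1) t)]
    push_cast; ring

private lemma Dlin {g : ℤ → ℤ} {N : ℤ} (hinj : Function.Injective g)
    (hsurj : Function.Surjective g)
    (hpos : ∀ m, N < m → 0 < g m) (hneg : ∀ m, m < -N → g m < 0) (k t : ℤ) :
    Dfun g k t = Dfun g k 0 - t := by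
  induction t using Int.induction_on with
  | zero => ring
  | succ i ih =>
    have h := Dt hinj hsurj hpos hneg k (i : ℤ)
    linarith
  | pred i ih =>
    have h := Dt hinj hsurj hpos hneg k (-(i : ℤ) - 1)
    rw [show (-(i : ℤ) - 1) + 1 = -(i : ℤ) by ring] at h
    linarith

private lemma crossing_pos (C : ℤ) (hC : 0 ≤ C) (h : ℤ → ℤ)
    (hstep : ∀ n, h n - C ≤ h (n + 1)) :
    ∀ (d : ℕ) (p : ℤ), C < h p → h (p + d) ≤ 0 →
      ∃ k, p < k ∧ k ≤ p + d ∧ 1 ≤ h k ∧ h k ≤ C := by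
  intro d
  induction d with
  | zero =>
    intro p hp hq
    rw [show p + ((0 : ℕ) : ℤ) = p by simp] at hq
    omega
  | succ d ih =>
    intro p hp hq
    rw [show p + ((d + 1 : ℕ) : ℤ) = (p + 1) + (d : ℤ) by push_cast; ring] at hq
    by_cases hc : C < h (p + 1)
    · obtain ⟨k, h1, h2, h3, h4⟩ := ih (p + 1) hc hq
      exact ⟨k, by omega, by push_cast; omega, h3, h4⟩
    · exact ⟨p + 1, by omega, by push_cast; omega, by have := hstep p; omega, by omega⟩

private lemma crossing_neg (C : ℤ) (hC : 0 ≤ C) (h : ℤ → ℤ)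
    (hstep : ∀ n, h n - C ≤ h (n + 1)) :
    ∀ (d : ℕ) (p : ℤ), 0 ≤ h p → h (p + d) < -C →
      ∃ k, p < k ∧ k ≤ p + d ∧ -C ≤ h k ∧ h k ≤ -1 := by
  intro d
  induction d with
  | zero =>
    intro p hp hq
    rw [show p + ((0 : ℕ) : ℤ) = p by simp] at hq
    omega
  | succ d ih =>
    intro p hp hq
    rw [show p + ((d + 1 : ℕ) : ℤ) = (p + 1) + (d : ℤ) by push_cast; ring] at hq
    by_cases hc : 0 ≤ h (p + 1)
    · obtain ⟨k, h1, h2, h3, h4⟩ := ih (p + 1) hc hq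
      exact ⟨k, by omega, by push_cast; omega, h3, h4⟩
    · exact ⟨p + 1, by omega, by push_cast; omega, by have := hstep p; omega, by omega⟩

private lemma pigeon (g : ℤ → ℤ) (hinj : Function.Injective g) (C B : ℤ) (hC : 0 ≤ C)
    (hpos : ∀ m, B ≤ m → 0 < g m) : ∃ n₀, B ≤ n₀ ∧ n₀ ≤ B + C ∧ C < g n₀ := by
  by_contra hcon
  push_neg at hcon
  have hmap : ∀ m ∈ Finset.Icc B (B + C), g m ∈ Finset.Icc 1 C := by
    intro m hm
    simp only [Finset.mem_Icc] at hm ⊢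
    exact ⟨hpos m hm.1, hcon m hm.1 hm.2⟩
  have hcard := Finset.card_le_card_of_injOn g hmap hinj.injOn
  rw [Int.card_Icc, Int.card_Icc] at hcard
  omega

private lemma master {X : Type} [TopologicalSpace X] [CompactSpace X] [T2Space X]
    (σ : X ≃ₜ X) (f : ℤ → X → ℤ)
    (hcont : ∀ n : ℤ, Continuous (f n))
    (hcoc : ∀ (m n : ℤ) (x : X), f (m + n) x = f m x + f n ((σ.toEquiv ^ m) x))
    (hbij : ∀ x : X, Function.Bijective fun n : ℤ => f n x) :
    ∃ a : X → ℤ,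
      ContinuousOn a {x | ∃ N : ℕ, ∀ n : ℤ, (N : ℤ) < n → 0 < f n x ∧ f (-n) x < 0} ∧
      ∀ x ∈ {x : X | ∃ N : ℕ, ∀ n : ℤ, (N : ℤ) < n → 0 < f n x ∧ f (-n) x < 0},
        f 1 x = a x - a (σ x) + 1 := by
  classical
  -- uniform bound on f 1
  obtain ⟨C₀, hC₀⟩ : ∃ C₀, ∀ x : X, |f 1 x| ≤ C₀ := by
    have hfin : (Set.range fun x => |f 1 x|).Finite :=
      (isCompact_range (by continuity)).finite_of_discrete
    obtain ⟨C₀, hC₀⟩ := hfin.bddAbove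
    exact ⟨C₀, fun x => hC₀ ⟨x, rfl⟩⟩
  obtain ⟨C, hC, habs⟩ : ∃ C : ℤ, 0 ≤ C ∧ ∀ z : X, -C ≤ f 1 z ∧ f 1 z ≤ C := by
    refine ⟨max C₀ 0, le_max_right _ _, fun z => ?_⟩
    have h1 := (abs_le.mp (hC₀ z)).1
    have h2 := (abs_le.mp (hC₀ z)).2
    have h3 : C₀ ≤ max C₀ 0 := le_max_left _ _
    omega
  -- step bound
  have hstep : ∀ (y : X) (n : ℤ), f n y - C ≤ f (n + 1) y ∧ f (n + 1) y ≤ f n y + C := by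
    intro y n
    have h := hcoc n 1 y
    have h2 := habs ((σ.toEquiv ^ n) y)
    omega
  -- relation between f at σ x and f at x
  have hσ : ∀ (y : X) (m : ℤ), f m (σ y) = f (m + 1) y - f 1 y := by
    intro y m
    have h := hcoc 1 m y
    rw [zpow_one] at h
    have hcoe : σ.toEquiv y = σ y := rfl
    rw [hcoe] at h
    rw [show m + 1 = 1 + m by ring]
    omega
  refine ⟨fun x => Dfun (fun m => f m x) 0 0, ?_, ?_⟩
  · -- continuity: local constancy near each point of the set
    intro x₀ hx₀
    obtain ⟨N, hN⟩ := hx₀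
    have hinj₀ : Function.Injective fun m : ℤ => f m x₀ := (hbij x₀).1
    have hsurj₀ : Function.Surjective fun m : ℤ => f m x₀ := (hbij x₀).2
    have hpos₀ : ∀ m : ℤ, (N : ℤ) < m → 0 < f m x₀ := fun m hm => (hN m hm).1
    have hneg₀ : ∀ m : ℤ, m < -(N : ℤ) → f m x₀ < 0 := by
      intro m hm
      have h := (hN (-m) (by omega)).2
      rwa [neg_neg] at h
    -- choose preimages
    set jv : ℤ → ℤ := fun v => Classical.choose (hsurj₀ v) with hjvdef
    have hjv : ∀ v, f (jv v) x₀ = v := fun v => Classical.choose_spec (hsurj₀ v)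
    obtain ⟨T, hTN, hT⟩ : ∃ T : ℤ, (N : ℤ) ≤ T ∧
        ∀ v : ℤ, -C ≤ v → v ≤ C → -T ≤ jv v ∧ jv v ≤ T := by
      refine ⟨max (N : ℤ) (((Finset.Icc (-C) C).sup fun v => (jv v).natAbs : ℕ) : ℤ),
        le_max_left _ _, fun v h1 h2 => ?_⟩
      have hle : (jv v).natAbs ≤ (Finset.Icc (-C) C).sup fun v => (jv v).natAbs :=
        Finset.le_sup (f := fun v => (jv v).natAbs) (Finset.mem_Icc.mpr ⟨h1, h2⟩)
      have h3 : (((Finset.Icc (-C) C).sup fun v => (jv v).natAbs : ℕ) : ℤ) ≤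
          max (N : ℤ) (((Finset.Icc (-C) C).sup fun v => (jv v).natAbs : ℕ) : ℤ) :=
        le_max_right _ _
      omega
    -- find n₀ with large positive value
    obtain ⟨n₀, hn₀1, hn₀2, hn₀3⟩ :=
      pigeon (fun m => f m x₀) hinj₀ C (T + 1) hC
        (fun m hm => hpos₀ m (by have := hTN; omega))
    -- find m₀ with large negative value
    obtain ⟨p₀, hp₀1, hp₀2, hp₀3⟩ :=
      pigeon (fun m => -(f (-m) x₀)) (fun a b hab => by
          have hab' : -(f (-a) x₀) = -(f (-b) x₀) := hab
          have := hinj₀ (show f (-a) x₀ = f (-b) x₀ by omega)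
          omega) C (T + 1) hC
        (fun m hm => by
          have h1 := hTN
          have h2 := hneg₀ (-m) (by omega)
          show 0 < -(f (-m) x₀)
          omega)
    set m₀ : ℤ := -p₀ with hm₀def
    have hm₀1 : -(T + 1 + C) ≤ m₀ := by omega
    have hm₀2 : m₀ ≤ -(T + 1) := by omega
    have hm₀3 : f m₀ x₀ < -C := by
      have : C < -(f (-p₀) x₀) := hp₀3
      simp only [hm₀def]
      omega
    set K : ℤ := T + 1 + C with hKdef
    have hK0 : 0 ≤ K := by omega
    set U : Set X := ⋂ j ∈ Finset.Icc (-K) K, (f j) ⁻¹' {f j x₀} with hUdef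
    have hUopen : IsOpen U :=
      isOpen_biInter_finset fun j _ => (isOpen_discrete {f j x₀}).preimage (hcont j)
    have hx₀U : x₀ ∈ U := by
      simp only [hUdef]
      exact Set.mem_iInter₂.mpr fun j _ => rfl
    have hUagree : ∀ y ∈ U, ∀ j : ℤ, -K ≤ j → j ≤ K → f j y = f j x₀ := by
      intro y hy j h1 h2
      simp only [hUdef, Set.mem_iInter, Set.mem_preimage, Set.mem_singleton_iff] at hy
      exact hy j (Finset.mem_Icc.mpr ⟨h1, h2⟩)
    -- sign control on U
    have hsignp : ∀ y ∈ U, ∀ m : ℤ, K < m → 0 < f m y := by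
      intro y hy m hm
      by_contra hcon
      push_neg at hcon
      have hfy : f n₀ y = f n₀ x₀ := hUagree y hy n₀ (by omega) (by omega)
      obtain ⟨k, hk1, hk2, hk3, hk4⟩ :=
        crossing_pos C hC (fun n => f n y) (fun n => (hstep y n).1) (m - n₀).toNat n₀
          (by omega)
          (by rw [show n₀ + ((m - n₀).toNat : ℤ) = m by omega]; exact hcon)
      have hkm : k ≤ m := by omega
      set v : ℤ := f k y with hvdef
      have hjb := hT v (by omega) (by omega)
      have hjx : f (jv v) x₀ = v := hjv v
      have hjlt : jv v < n₀ := by omega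
      by_cases hkK : k ≤ K
      · have h1 : f k x₀ = v := by rw [← hUagree y hy k (by omega) hkK]
        have : k = jv v := hinj₀ (h1.trans hjx.symm)
        omega
      · have h1 : f (jv v) y = v := (hUagree y hy (jv v) (by omega) (by omega)).trans hjx
        have : k = jv v := (hbij y).1 (show f k y = f (jv v) y from h1.symm)
        omega
    have hsignn : ∀ y ∈ U, ∀ m : ℤ, m < -K → f m y < 0 := by
      intro y hy m hm
      by_contra hcon
      push_neg at hcon
      have hfy : f m₀ y = f m₀ x₀ := hUagree y hy m₀ (by omega) (by omega)
      obtain ⟨k, hk1, hk2, hk3, hk4⟩ :=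
        crossing_neg C hC (fun n => f n y) (fun n => (hstep y n).1) (m₀ - m).toNat m
          (by omega)
          (by rw [show m + ((m₀ - m).toNat : ℤ) = m₀ by omega]; omega)
      have hkm : k ≤ m₀ := by omega
      set v : ℤ := f k y with hvdef
      have hjb := hT v (by omega) (by omega)
      have hjx : f (jv v) x₀ = v := hjv v
      have hjgt : m₀ < jv v := by omega
      by_cases hkK : -K ≤ k
      · have h1 : f k x₀ = v := by rw [← hUagree y hy k hkK (by omega)]
        have : k = jv v := hinj₀ (h1.trans hjx.symm)
        omega
      · have h1 : f (jv v) y = v := (hUagree y hy (jv v) (by omega) (by omega)).trans hjx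
        have : k = jv v := (hbij y).1 (show f k y = f (jv v) y from h1.symm)
        omega
    -- value of a on U
    have hval : ∀ y ∈ U, Dfun (fun m => f m y) 0 0 =
        (({m : ℤ | -K ≤ m ∧ m ≤ 0 ∧ 1 ≤ f m x₀}.ncard : ℤ) -
          ({m : ℤ | m ≤ K ∧ 1 ≤ m ∧ f m x₀ ≤ 0}.ncard : ℤ)) := by
      intro y hy
      unfold Dfun
      have eP : {m : ℤ | m ≤ 0 ∧ 0 + 1 ≤ f m y} = {m : ℤ | -K ≤ m ∧ m ≤ 0 ∧ 1 ≤ f m x₀} := by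
        ext m
        simp only [Set.mem_setOf_eq]
        constructor
        · rintro ⟨h1, h2⟩
          have hmK : -K ≤ m := by
            by_contra hc
            have := hsignn y hy m (by omega)
            omega
          rw [hUagree y hy m hmK (by omega)] at h2
          exact ⟨hmK, h1, by omega⟩
        · rintro ⟨h0, h1, h2⟩
          refine ⟨h1, ?_⟩
          rw [hUagree y hy m h0 (by omega)]
          omega
      have eQ : {m : ℤ | 0 + 1 ≤ m ∧ f m y ≤ 0} = {m : ℤ | m ≤ K ∧ 1 ≤ m ∧ f m x₀ ≤ 0} := by
        ext m
        simp only [Set.mem_setOf_eq]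
        constructor
        · rintro ⟨h1, h2⟩
          have hmK : m ≤ K := by
            by_contra hc
            have := hsignp y hy m (by omega)
            omega
          rw [hUagree y hy m (by omega) hmK] at h2
          exact ⟨hmK, by omega, h2⟩
        · rintro ⟨h0, h1, h2⟩
          refine ⟨by omega, ?_⟩
          rw [hUagree y hy m (by omega) h0]
          omega
      rw [eP, eQ]
    have hconst : ∀ y ∈ U, Dfun (fun m => f m y) 0 0 = Dfun (fun m => f m x₀) 0 0 :=
      fun y hy => (hval y hy).trans (hval x₀ hx₀U).symm
    have hev : (fun x => Dfun (fun m => f m x) 0 0) =ᶠ[nhds x₀]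
        fun _ => Dfun (fun m => f m x₀) 0 0 :=
      Filter.eventually_of_mem (hUopen.mem_nhds hx₀U) hconst
    exact hev.continuousAt.continuousWithinAt
  · -- the coboundary identity
    intro x hx
    obtain ⟨N, hN⟩ := hx
    have hinj : Function.Injective fun m : ℤ => f m x := (hbij x).1
    have hsurj : Function.Surjective fun m : ℤ => f m x := (hbij x).2
    have hpos : ∀ m : ℤ, (N : ℤ) < m → 0 < f m x := fun m hm => (hN m hm).1
    have hneg : ∀ m : ℤ, m < -(N : ℤ) → f m x < 0 := by
      intro m hm
      have h := (hN (-m) (by omega)).2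
      rwa [neg_neg] at h
    set c : ℤ := f 1 x with hcdef
    have hshift : Dfun (fun m => f m (σ x)) 0 0 = Dfun (fun m => f m x) 1 c := by
      unfold Dfun
      have eP : {m : ℤ | m ≤ 0 ∧ 0 + 1 ≤ f m (σ x)} =
          (fun m : ℤ => m - 1) '' {m : ℤ | m ≤ 1 ∧ c + 1 ≤ f m x} := by
        ext m
        simp only [Set.mem_setOf_eq, Set.mem_image]
        constructor
        · rintro ⟨h1, h2⟩
          rw [hσ x m] at h2
          exact ⟨m + 1, ⟨by omega, by omega⟩, by ring⟩
        · rintro ⟨n, ⟨h1, h2⟩, rfl⟩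
          refine ⟨by omega, ?_⟩
          rw [hσ x (n - 1), show n - 1 + 1 = n by ring]
          omega
      have eQ : {m : ℤ | 0 + 1 ≤ m ∧ f m (σ x) ≤ 0} =
          (fun m : ℤ => m - 1) '' {m : ℤ | 1 + 1 ≤ m ∧ f m x ≤ c} := by
        ext m
        simp only [Set.mem_setOf_eq, Set.mem_image]
        constructor
        · rintro ⟨h1, h2⟩
          rw [hσ x m] at h2
          exact ⟨m + 1, ⟨by omega, by omega⟩, by ring⟩
        · rintro ⟨n, ⟨h1, h2⟩, rfl⟩
          refine ⟨by omega, ?_⟩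
          rw [hσ x (n - 1), show n - 1 + 1 = n by ring]
          omega
      have hinj1 : Function.Injective fun m : ℤ => m - 1 := fun a b hab => by
        simp only [] at hab; omega
      rw [eP, eQ, Set.ncard_image_of_injective _ hinj1, Set.ncard_image_of_injective _ hinj1]
    have h1 : Dfun (fun m => f m x) 1 c = Dfun (fun m => f m x) 0 c + 1 := by
      have h := Dk hinj hpos hneg 0 c
      rwa [show (0 : ℤ) + 1 = 1 by ring] at h
    have h2 : Dfun (fun m => f m x) 0 c = Dfun (fun m => f m x) 0 0 - c :=
      Dlin hinj hsurj hpos hneg 0 c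
    simp only []
    rw [hshift, h1, h2]
    ring

theorem statement_17 (X : Type) [TopologicalSpace X] [CompactSpace X] [T2Space X]
    (σ : X ≃ₜ X) (f : ℤ → X → ℤ)
    (hcont : ∀ n : ℤ, Continuous (f n))
    (hcoc : ∀ (m n : ℤ) (x : X), f (m + n) x = f m x + f n ((σ.toEquiv ^ m) x))
    (hbij : ∀ x : X, Function.Bijective fun n : ℤ => f n x)
    (X₁ X₂ : Set X)
    (hX₁ : X₁ = {x | ∃ N : ℕ, ∀ n : ℤ, (N : ℤ) < n → 0 < f n x ∧ f (-n) x < 0})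
    (hX₂ : X₂ = {x | ∃ N : ℕ, ∀ n : ℤ, (N : ℤ) < n → f n x < 0 ∧ 0 < f (-n) x}) :
    ∃ a b : X → ℤ, ContinuousOn a X₁ ∧ ContinuousOn b X₂ ∧
      (∀ x ∈ X₁, f 1 x = a x - a (σ x) + 1) ∧
      (∀ x ∈ X₂, f 1 x = b x - b (σ x) - 1) := by
  obtain ⟨a, ha1, ha2⟩ := master σ f hcont hcoc hbij
  obtain ⟨b', hb1, hb2⟩ := master σ (fun n x => -(f n x)) (fun n => (hcont n).neg)
    (fun m n x => by
      have := hcoc m n x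
      show -(f (m + n) x) = -(f m x) + -(f n ((σ.toEquiv ^ m) x))
      omega)
    (fun x => by
      constructor
      · intro p q h
        have h' : -(f p x) = -(f q x) := h
        exact (hbij x).1 (show f p x = f q x by omega)
      · intro v
        obtain ⟨n, hn⟩ := (hbij x).2 (-v)
        have hn' : f n x = -v := hn
        exact ⟨n, show -(f n x) = v by omega⟩)
  have hset : {x : X | ∃ N : ℕ, ∀ n : ℤ, (N : ℤ) < n →
      0 < -(f n x) ∧ -(f (-n) x) < 0} = X₂ := by
    rw [hX₂]
    ext x
    simp only [Set.mem_setOf_eq]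
    constructor <;> rintro ⟨N, hN⟩ <;> exact ⟨N, fun n hn => by have := hN n hn; omega⟩
  rw [hset] at hb1 hb2
  refine ⟨a, fun x => -(b' x), ?_, ?_, ?_, ?_⟩
  · rw [hX₁]; exact ha1
  · exact (continuous_neg.comp_continuousOn hb1 : _)
  · intro x hx
    rw [hX₁] at hx
    exact ha2 x hx
  · intro x hx
    have h : -(f 1 x) = b' x - b' (σ x) + 1 := hb2 x hx
    show f 1 x = -(b' x) - -(b' (σ x)) - 1
    omega
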